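/- Let R be a commutative ring, p a prime number, and n ∈ ℕ. If x ∈ 𝕎 R is a Witt vector all of whose coefficients lie in 𝔞_n(R), then pⁿ·x = 0 in 𝕎 R. In particular every such Witt vector is annihilated by a power of p. -/

import Mathlib

/-- The subset `𝔞_n(R) = {x ∈ R : p^{n−i}·x^{p^i} = 0 for all 0 ≤ i ≤ n}`. -/
def wittAnnSet (R : Type*) [CommRing R] (p n : ℕ) : Set R :=
  {x | ∀ i ≤ n, (p : R) ^ (n - i) * x ^ p ^ i = 0}

namespace WittAnnAux

open MvPolynomial WittVector

variable {p : ℕ} [hp : Fact p.Prime] {R : Type*} [CommRing R] {n : ℕ}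

theorem zero_mem : (0 : R) ∈ wittAnnSet R p n := by
  intro i _
  rw [zero_pow (pow_ne_zero i hp.out.ne_zero), mul_zero]

theorem smul_mem (r : R) {a : R} (ha : a ∈ wittAnnSet R p n) :
    r * a ∈ wittAnnSet R p n := by
  intro i hi
  have := ha i hi
  calc (p : R) ^ (n - i) * (r * a) ^ p ^ i
      = r ^ p ^ i * ((p : R) ^ (n - i) * a ^ p ^ i) := by ring
    _ = 0 := by rw [this, mul_zero]

theorem add_mem {a b : R} (ha : a ∈ wittAnnSet R p n) (hb : b ∈ wittAnnSet R p n) :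
    a + b ∈ wittAnnSet R p n := by
  intro i hi
  rw [add_pow, Finset.mul_sum]
  apply Finset.sum_eq_zero
  intro j hj
  rw [Finset.mem_range, Nat.lt_succ_iff] at hj
  rcases eq_or_ne j 0 with rfl | hj0
  · simp only [pow_zero, one_mul, Nat.sub_zero, Nat.choose_zero_right, Nat.cast_one, mul_one]
    exact hb i hi
  · set t := multiplicity p j with ht
    have hptj : p ^ t ∣ j := pow_multiplicity_dvd p j
    have hptle : p ^ t ≤ j := Nat.le_of_dvd (Nat.pos_of_ne_zero hj0) hptj
    have hti : t ≤ i := (Nat.pow_le_pow_iff_right hp.out.one_lt).1 (hptle.trans hj)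
    have hdvd : (p : ℕ) ^ (i - t) ∣ (p ^ i).choose j :=
      pow_dvd_of_le_emultiplicity (by rw [hp.out.emultiplicity_choose_prime_pow hj hj0])
    have d1 : (p : R) ^ (i - t) ∣ (((p ^ i).choose j : ℕ) : R) := by
      obtain ⟨c, hc⟩ := hdvd
      exact ⟨(c : R), by rw [hc]; push_cast; ring⟩
    have d2 : a ^ p ^ t ∣ a ^ j := pow_dvd_pow a hptle
    have key : (p : R) ^ (n - t) * a ^ p ^ t = 0 := ha t (hti.trans hi)
    have hdd : ((p : R) ^ (n - t) * a ^ p ^ t) ∣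
        ((p : R) ^ (n - i) * (((p ^ i).choose j : ℕ) : R)) * (a ^ j * b ^ (p ^ i - j)) := by
      have he : (n - i) + (i - t) = n - t := by omega
      rw [← he, pow_add]
      exact mul_dvd_mul (mul_dvd_mul_left _ d1) (dvd_mul_of_dvd_left d2 _)
    rw [key, zero_dvd_iff] at hdd
    calc (p : R) ^ (n - i) * (a ^ j * b ^ (p ^ i - j) * (((p ^ i).choose j : ℕ) : R))
        = ((p : R) ^ (n - i) * (((p ^ i).choose j : ℕ) : R)) * (a ^ j * b ^ (p ^ i - j)) := by
          ring
      _ = 0 := hdd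

/-- `wittAnnSet` as an ideal. -/
def annIdeal (R : Type*) [CommRing R] (p : ℕ) [Fact p.Prime] (n : ℕ) : Ideal R where
  carrier := wittAnnSet R p n
  zero_mem' := zero_mem
  add_mem' := add_mem
  smul_mem' := fun r a ha => smul_mem r ha

theorem mem_annIdeal_iff {a : R} : a ∈ annIdeal R p n ↔ a ∈ wittAnnSet R p n := Iff.rfl

theorem p_mul_mem {a : R} (ha : a ∈ wittAnnSet R p (n + 1)) :
    (p : R) * a ∈ wittAnnSet R p n := by
  intro i hi
  have key : (p : R) ^ (n + 1 - i) * a ^ p ^ i = 0 := ha i (hi.trans n.le_succ)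
  have he : (n - i) + p ^ i = (n + 1 - i) + (p ^ i - 1) := by
    have : 1 ≤ p ^ i := Nat.one_le_iff_ne_zero.mpr (pow_ne_zero i hp.out.ne_zero)
    omega
  calc (p : R) ^ (n - i) * ((p : R) * a) ^ p ^ i
      = (p : R) ^ ((n - i) + p ^ i) * a ^ p ^ i := by rw [mul_pow, pow_add]; ring
    _ = (p : R) ^ (p ^ i - 1) * ((p : R) ^ (n + 1 - i) * a ^ p ^ i) := by
        rw [he, pow_add]; ring
    _ = 0 := by rw [key, mul_zero]

theorem pow_p_mem {a : R} (ha : a ∈ wittAnnSet R p (n + 1)) :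
    a ^ p ∈ wittAnnSet R p n := by
  intro i hi
  have key : (p : R) ^ (n + 1 - (i + 1)) * a ^ p ^ (i + 1) = 0 :=
    ha (i + 1) (Nat.succ_le_succ hi)
  calc (p : R) ^ (n - i) * (a ^ p) ^ p ^ i
      = (p : R) ^ (n + 1 - (i + 1)) * a ^ p ^ (i + 1) := by
        rw [← pow_mul, pow_succ, Nat.succ_sub_succ]; ring_nf
    _ = 0 := key

variable (p)

theorem aeval_X_eq_map (q : MvPolynomial ℕ ℤ) :
    aeval (X : ℕ → MvPolynomial ℕ (ZMod p)) q = map (Int.castRingHom (ZMod p)) q := by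
  have h : (aeval (X : ℕ → MvPolynomial ℕ (ZMod p))).toRingHom =
      (MvPolynomial.map (Int.castRingHom (ZMod p)) :
        MvPolynomial ℕ ℤ →+* MvPolynomial ℕ (ZMod p)) := by
    apply MvPolynomial.ringHom_ext
    · intro r
      simp [map_intCast]
    · intro i
      simp
  exact congrArg (fun f => f q) (congrArg DFunLike.coe h)

theorem map_wittMulN_succ (k : ℕ) :
    map (Int.castRingHom (ZMod p)) (wittMulN p p (k + 1)) =
      (X k : MvPolynomial ℕ (ZMod p)) ^ p := by
  have h1 := WittVector.mulN_coeff (p := p)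
    (R := MvPolynomial ℕ (ZMod p)) p (WittVector.mk p X) (k + 1)
  rw [← WittVector.verschiebung_frobenius, WittVector.verschiebung_coeff_succ,
    WittVector.coeff_frobenius_charP, WittVector.coeff_mk] at h1
  exact (aeval_X_eq_map p _).symm.trans h1.symm

theorem constantCoeff_wittMulN (m k : ℕ) :
    MvPolynomial.constantCoeff (wittMulN p m k) = (0 : ℤ) := by
  have h := WittVector.mulN_coeff (p := p) (R := ℤ) m 0 k
  rw [zero_mul, WittVector.zero_coeff] at h
  have hc : (0 : WittVector p ℤ).coeff = (fun _ => (0 : ℤ)) := by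
    funext i; exact WittVector.zero_coeff p ℤ i
  rw [hc, MvPolynomial.aeval_zero'] at h
  simpa using h.symm

theorem exists_Q (k : ℕ) :
    ∃ Q : MvPolynomial ℕ ℤ, MvPolynomial.constantCoeff Q = 0 ∧
      wittMulN p p (k + 1) = X k ^ p + C ((p : ℕ) : ℤ) * Q := by
  have h : C ((p : ℕ) : ℤ) ∣ (wittMulN p p (k + 1) - X k ^ p) := by
    rw [MvPolynomial.C_dvd_iff_zmod, map_sub, map_wittMulN_succ, map_pow, map_X, sub_self]
  obtain ⟨Q, hQ⟩ := h
  have heq : wittMulN p p (k + 1) = X k ^ p + C ((p : ℕ) : ℤ) * Q := by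
    linear_combination hQ
  refine ⟨Q, ?_, heq⟩
  have := congrArg MvPolynomial.constantCoeff heq
  rw [constantCoeff_wittMulN] at this
  simp only [map_add, map_mul, map_pow, constantCoeff_X, constantCoeff_C,
    zero_pow hp.out.ne_zero, zero_add] at this
  have hp0 : ((p : ℕ) : ℤ) ≠ 0 := by exact_mod_cast hp.out.ne_zero
  exact (mul_eq_zero.mp this.symm).resolve_left hp0

variable {p}

theorem key_step (x : WittVector p R) (hx : ∀ k, x.coeff k ∈ wittAnnSet R p (n + 1)) :
    ∀ k, (x * (p : WittVector p R)).coeff k ∈ wittAnnSet R p n := by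
  intro k
  cases k with
  | zero =>
    have h0 : (x * (p : WittVector p R)).coeff 0 = (p : R) * x.coeff 0 := by
      have := map_mul (WittVector.constantCoeff (p := p) (R := R)) x (p : WittVector p R)
      simpa [mul_comm] using this
    rw [h0]
    exact p_mul_mem (hx 0)
  | succ k =>
    obtain ⟨Q, hQ0, hQ⟩ := exists_Q p k
    have h1 : (x * (p : WittVector p R)).coeff (k + 1) =
        x.coeff k ^ p + (p : R) * (aeval x.coeff Q) := by
      have := WittVector.mulN_coeff (p := p) p x (k + 1)
      rw [hQ] at this
      simpa using this
    rw [h1]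
    have hA : x.coeff k ^ p ∈ annIdeal R p n := pow_p_mem (hx k)
    have hB : (p : R) * aeval x.coeff Q ∈ annIdeal R p n := by
      have hQmem : Q ∈ Ideal.span (MvPolynomial.X '' (Set.univ : Set ℕ) :
          Set (MvPolynomial ℕ ℤ)) := by
        rw [MvPolynomial.mem_ideal_span_X_image]
        intro m hm
        have hm0 : m ≠ 0 := by
          rintro rfl
          exact (MvPolynomial.mem_support_iff.mp hm) hQ0
        obtain ⟨i, hi⟩ := Finsupp.ne_iff.mp hm0
        exact ⟨i, Set.mem_univ i, by simpa using hi⟩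
      have : aeval x.coeff Q ∈ Ideal.span (Set.range x.coeff) := by
        have hmap := Ideal.mem_map_of_mem ((aeval x.coeff : MvPolynomial ℕ ℤ →ₐ[ℤ] R)).toRingHom hQmem
        rw [Ideal.map_span] at hmap
        have himg : (⇑((aeval x.coeff : MvPolynomial ℕ ℤ →ₐ[ℤ] R)).toRingHom '' (MvPolynomial.X '' (Set.univ : Set ℕ))) =
            Set.range x.coeff := by
          ext r
          simp [Set.image_image]
        rwa [himg] at hmap
      -- span of coefficients lands in {r | p * r ∈ annIdeal}
      have hle : Ideal.span (Set.range x.coeff) ≤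
          Submodule.comap (LinearMap.lsmul R R (p : R)) (annIdeal R p n) := by
        rw [Ideal.span_le]
        rintro _ ⟨m, rfl⟩
        exact p_mul_mem (hx m)
      exact hle this
    exact (annIdeal R p n).add_mem hA hB

end WittAnnAux

/-- A `p`-typical Witt vector all of whose coefficients lie in `𝔞_n(R)` is annihilated
by `pⁿ`. -/
theorem stmt10 (p : ℕ) [Fact p.Prime] (R : Type*) [CommRing R] (n : ℕ)
    (x : WittVector p R) (hx : ∀ k, x.coeff k ∈ wittAnnSet R p n) :
    (p : WittVector p R) ^ n * x = 0 := by
  induction n generalizing x with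
  | zero =>
    have hx0 : x = 0 := by
      ext k
      have := hx k 0 le_rfl
      simpa using this
    rw [hx0, mul_zero]
  | succ n ih =>
    have h1 : ∀ k, (x * (p : WittVector p R)).coeff k ∈ wittAnnSet R p n :=
      WittAnnAux.key_step x hx
    have h2 : (p : WittVector p R) ^ n * (x * (p : WittVector p R)) = 0 := ih _ h1
    calc (p : WittVector p R) ^ (n + 1) * x
        = (p : WittVector p R) ^ n * (x * (p : WittVector p R)) := by ring
      _ = 0 := h2
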